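/- Let A, B, C, D ∈ ℝ with C + 2D ≠ 0. If p = (x,y,z) satisfies z = ½(1 − x² − y²), Ax + By + Cz + D = 0, and (x,y) ≠ (0,0), then the point (X,Y) = (x,y)/(x²+y²) satisfies (X + A/(C+2D))² + (Y + B/(C+2D))² = (A² + B² + C(C+2D))/(C+2D)². Thus the stereographic image of a small circle of Σ² avoiding the North pole is contained in a circle in ℂ. -/

import Mathlib

/-- If C + 2D ≠ 0 and p = (x,y,z) ≠ N lies on the parabolic unit sphere
z = ½(1 − x² − y²) and on the plane Ax + By + Cz + D = 0 (a small circle of Σ² avoiding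
the North pole), then the stereographic image (X,Y) = (x,y)/(x²+y²) lies on the circle
(X + A/(C+2D))² + (Y + B/(C+2D))² = (A² + B² + C(C+2D))/(C+2D)². -/
theorem stmt7 (A B C D x y z : ℝ) (hCD : C + 2 * D ≠ 0)
    (hS : z = (1 - x ^ 2 - y ^ 2) / 2)
    (hP : A * x + B * y + C * z + D = 0) (hxy : (x, y) ≠ (0, 0)) :
    (x / (x ^ 2 + y ^ 2) + A / (C + 2 * D)) ^ 2 +
      (y / (x ^ 2 + y ^ 2) + B / (C + 2 * D)) ^ 2 =
      (A ^ 2 + B ^ 2 + C * (C + 2 * D)) / (C + 2 * D) ^ 2 := by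
  have hr : x ^ 2 + y ^ 2 ≠ 0 := by
    intro h
    have hx : x = 0 := by nlinarith [sq_nonneg x, sq_nonneg y]
    have hy : y = 0 := by nlinarith [sq_nonneg x, sq_nonneg y]
    exact hxy (by simp [hx, hy])
  subst hS
  have key : (x * (C + 2 * D) + A * (x ^ 2 + y ^ 2)) ^ 2 +
      (y * (C + 2 * D) + B * (x ^ 2 + y ^ 2)) ^ 2 =
      (A ^ 2 + B ^ 2 + C * (C + 2 * D)) * (x ^ 2 + y ^ 2) ^ 2 := by
    linear_combination (2 * (x ^ 2 + y ^ 2) * (C + 2 * D)) * hP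
  have e1 : x / (x ^ 2 + y ^ 2) + A / (C + 2 * D) =
      (x * (C + 2 * D) + A * (x ^ 2 + y ^ 2)) / ((x ^ 2 + y ^ 2) * (C + 2 * D)) := by
    field_simp
  have e2 : y / (x ^ 2 + y ^ 2) + B / (C + 2 * D) =
      (y * (C + 2 * D) + B * (x ^ 2 + y ^ 2)) / ((x ^ 2 + y ^ 2) * (C + 2 * D)) := by
    field_simp
  rw [e1, e2, div_pow, div_pow, ← add_div, key]
  field_simp
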